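/- arXiv:1912.06477 — 5 statements merged into one kernel-verified Lean document; each statement's English description precedes it below -/
import Mathlib

section
/- (Derivative of the pullback of a time-dependent k-form; Proposition A.2 of the paper, stated on a normed space.) Let V be a finite-dimensional real normed vector space and k ∈ ℕ. Let g : ℝ × V → V be twice continuously differentiable with each g(t,·) : V → V a diffeomorphism, and let X(t,y) := (∂ₛ g(s,x))|_{s=t} at x = g(t,·)⁻¹(y) be the Eulerian velocity field. Let ω : ℝ × V → (alternating continuous k-linear maps Vᵏ → ℝ) be continuously differentiable in (t,x). Define the pullback (gₜ*ωₜ)(x)(v₁,…,v_k) := ω(t, g(t,x))(D g(t,·)|_x v₁, …, D g(t,·)|_x v_k) and the Lie derivative (ℒ_{Xₜ}ωₜ)(x)(v₁,…,v_k) := (D_x ω(t,·)|_x (X(t,x)))(v₁,…,v_k) + Σ_{i=1}^{k} ω(t,x)(v₁,…,v_{i-1}, D_x X(t,·)|_x v_i, v_{i+1},…,v_k). Then for all t, x, v₁,…,v_k: ∂ₜ[(gₜ*ωₜ)(x)(v₁,…,v_k)] = [gₜ*(∂ₜωₜ + ℒ_{Xₜ}ωₜ)](x)(v₁,…,v_k).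 -/
/-- Proposition A.2: derivative of the pullback of a time-dependent `k`-form,
stated on a finite-dimensional normed space with `k`-forms realized as
continuous multilinear maps that are alternating.
`∂ₜ(gₜ*ωₜ) = gₜ*(∂ₜωₜ + ℒ_{Xₜ}ωₜ)`. -/
theorem derivative_of_pullback_of_time_dependent_k_form
    {V : Type*} [NormedAddCommGroup V] [NormedSpace ℝ V] [FiniteDimensional ℝ V]
    (k : ℕ)
    (g : ℝ × V → V) (hg : ContDiff ℝ 2 g)
    (ginv : ℝ → V → V)
    (hginv_left : ∀ (t : ℝ) (x : V), ginv t (g (t, x)) = x)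
    (hginv_right : ∀ (t : ℝ) (y : V), g (t, ginv t y) = y)
    (hginv_smooth : ∀ t : ℝ, ContDiff ℝ 1 (ginv t))
    (X : ℝ → V → V)
    (hX : ∀ (t : ℝ) (y : V), X t y = deriv (fun s => g (s, ginv t y)) t)
    (ω : ℝ × V → ContinuousMultilinearMap ℝ (fun _ : Fin k => V) ℝ)
    (hω : ContDiff ℝ 1 ω)
    (halt : ∀ (t : ℝ) (x : V) (v : Fin k → V) (i j : Fin k),
      v i = v j → i ≠ j → ω (t, x) v = 0) :
    ∀ (t : ℝ) (x : V) (v : Fin k → V),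
      deriv (fun τ => ω (τ, g (τ, x))
          (fun i => fderiv ℝ (fun x' => g (τ, x')) x (v i))) t
        = (deriv (fun s => ω (s, g (t, x))) t)
            (fun i => fderiv ℝ (fun x' => g (t, x')) x (v i))
          + (fderiv ℝ (fun y => ω (t, y)) (g (t, x)) (X t (g (t, x))))
              (fun i => fderiv ℝ (fun x' => g (t, x')) x (v i))
          + ∑ i : Fin k,
              ω (t, g (t, x))
                (Function.update (fun j => fderiv ℝ (fun x' => g (t, x')) x (v j)) i
                  (fderiv ℝ (X t) (g (t, x))
                    (fderiv ℝ (fun x' => g (t, x')) x (v i)))) := by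
  classical
  intro t x v
  set P : ℝ × V → (ℝ × V) →L[ℝ] V := fderiv ℝ g with hPdef
  have hgdiff : Differentiable ℝ g := hg.differentiable (by norm_num)
  have hP : ContDiff ℝ 1 P := hg.fderiv_right (by norm_num)
  have hPdiff : Differentiable ℝ P := hP.differentiable one_ne_zero
  have hωdiff : Differentiable ℝ ω := hω.differentiable one_ne_zero
  -- spatial partial derivative of g
  have hgx : ∀ (τ : ℝ) (y : V), HasFDerivAt (fun x' => g (τ, x'))
      ((P (τ, y)).comp (ContinuousLinearMap.inr ℝ ℝ V)) y := fun τ y =>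
    (hgdiff (τ, y)).hasFDerivAt.comp y (hasFDerivAt_prodMk_right τ y)
  have hgx' : ∀ (τ : ℝ) (y : V) (w : V),
      fderiv ℝ (fun x' => g (τ, x')) y w = P (τ, y) (0, w) := fun τ y w => by
    rw [(hgx τ y).fderiv]; rfl
  -- time derivative of g
  have hgt : ∀ (τ : ℝ) (y : V), HasDerivAt (fun s => g (s, y)) (P (τ, y) (1, 0)) τ :=
    fun τ y => (hgdiff (τ, y)).hasFDerivAt.comp_hasDerivAt τ
      (HasDerivAt.prodMk (hasDerivAt_id τ) (hasDerivAt_const τ y))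
  -- X in terms of P
  have hXg : ∀ (τ : ℝ) (y : V), X τ (g (τ, y)) = P (τ, y) (1, 0) := fun τ y => by
    rw [hX, hginv_left, (hgt τ y).deriv]
  -- X t is C¹
  have hXt : ContDiff ℝ 1 (X t) := by
    have e : X t = fun y => P (t, ginv t y) (1, 0) := by
      funext y
      rw [hX, (hgt t (ginv t y)).deriv]
    rw [e]
    exact (hP.comp (contDiff_const.prodMk (hginv_smooth t))).clm_apply contDiff_const
  -- symmetry of the second derivative of g
  have hsymm : ∀ a b : ℝ × V, fderiv ℝ P (t, x) a b = fderiv ℝ P (t, x) b a :=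
    hg.contDiffAt.isSymmSndFDerivAt (by norm_num)
  -- derivative of τ ↦ P (τ, x)
  have hPt : HasDerivAt (fun τ => P (τ, x)) (fderiv ℝ P (t, x) (1, 0)) t :=
    (hPdiff (t, x)).hasFDerivAt.comp_hasDerivAt t
      (HasDerivAt.prodMk (hasDerivAt_id t) (hasDerivAt_const t x))
  have hB : ∀ i : Fin k, HasDerivAt (fun τ => P (τ, x) (0, v i))
      (fderiv ℝ P (t, x) (1, 0) (0, v i)) t := fun i => by
    simpa using hPt.clm_apply (hasDerivAt_const t ((0 : ℝ), v i))
  -- derivative of τ ↦ ω (τ, g (τ, x))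
  have hA : HasDerivAt (fun τ => ω (τ, g (τ, x)))
      (fderiv ℝ ω (t, g (t, x)) (1, P (t, x) (1, 0))) t :=
    (hωdiff (t, g (t, x))).hasFDerivAt.comp_hasDerivAt t
      (HasDerivAt.prodMk (hasDerivAt_id t) (hgt t x))
  -- the key chain rule / symmetry computation
  have hchain : ∀ w : V, fderiv ℝ (X t) (g (t, x)) (P (t, x) (0, w))
      = fderiv ℝ P (t, x) (1, 0) (0, w) := by
    intro w
    have hPx : HasFDerivAt (fun x' => P (t, x'))
        ((fderiv ℝ P (t, x)).comp (ContinuousLinearMap.inr ℝ ℝ V)) x :=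
      (hPdiff (t, x)).hasFDerivAt.comp x (hasFDerivAt_prodMk_right t x)
    have h2 : HasFDerivAt (fun x' => P (t, x') (1, 0))
        ((ContinuousLinearMap.apply ℝ V ((1 : ℝ), (0 : V))).comp
          ((fderiv ℝ P (t, x)).comp (ContinuousLinearMap.inr ℝ ℝ V))) x :=
      (ContinuousLinearMap.apply ℝ V ((1 : ℝ), (0 : V))).hasFDerivAt.comp x hPx
    have h1 : HasFDerivAt (fun x' => X t (g (t, x')))
        ((fderiv ℝ (X t) (g (t, x))).comp
          ((P (t, x)).comp (ContinuousLinearMap.inr ℝ ℝ V))) x :=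
      ((hXt.differentiable one_ne_zero) (g (t, x))).hasFDerivAt.comp x (hgx t x)
    have heq : (fun x' => X t (g (t, x'))) = fun x' => P (t, x') (1, 0) :=
      funext fun x' => hXg t x'
    have huniq := (heq ▸ h1).unique h2
    have := congrArg (fun (L : V →L[ℝ] V) => L w) huniq
    simp only [ContinuousLinearMap.comp_apply, ContinuousLinearMap.inr_apply,
      ContinuousLinearMap.apply_apply] at this
    rw [this, hsymm]
  -- product rule
  have key := hA.hasFDerivAt.linear_multilinear_comp (fun i => (hB i).hasFDerivAt)
    (ContinuousLinearMap.id ℝ (ContinuousMultilinearMap ℝ (fun _ : Fin k => V) ℝ))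
  simp only [ContinuousLinearMap.id_apply] at key
  have hLHS := key.hasDerivAt.deriv
  -- derivative of s ↦ ω (s, g (t, x))
  have hωt : HasDerivAt (fun s => ω (s, g (t, x))) (fderiv ℝ ω (t, g (t, x)) (1, 0)) t :=
    (hωdiff (t, g (t, x))).hasFDerivAt.comp_hasDerivAt t
      (HasDerivAt.prodMk (hasDerivAt_id t) (hasDerivAt_const t (g (t, x))))
  have hωx : ∀ w : V, fderiv ℝ (fun y => ω (t, y)) (g (t, x)) w
      = fderiv ℝ ω (t, g (t, x)) (0, w) := fun w => by
    have h : HasFDerivAt (fun y => ω (t, y))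
        ((fderiv ℝ ω (t, g (t, x))).comp (ContinuousLinearMap.inr ℝ ℝ V)) (g (t, x)) :=
      (hωdiff (t, g (t, x))).hasFDerivAt.comp (g (t, x))
        (hasFDerivAt_prodMk_right t (g (t, x)))
    rw [h.fderiv]; rfl
  simp only [hgx']
  rw [hLHS, hωt.deriv]
  simp only [hωx, hXg, hchain]
  have hsplit : fderiv ℝ ω (t, g (t, x)) (1, P (t, x) (1, 0))
      = fderiv ℝ ω (t, g (t, x)) (1, 0) + fderiv ℝ ω (t, g (t, x)) (0, P (t, x) (1, 0)) := by
    rw [← map_add]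
    norm_num
  simp [hsplit, Function.comp]
end

section
/- (Corollary A.3 of the paper for functions: advection of a pushed-forward function.) Let V be a finite-dimensional real normed vector space, let g : ℝ × V → V be continuously differentiable with each g(t,·) a diffeomorphism and with (t,y) ↦ g(t,·)⁻¹(y) continuously differentiable, and let X(t,y) := (∂ₛ g(s,x))|_{s=t} at x = g(t,·)⁻¹(y) be the Eulerian velocity field. Let f : V → ℝ be continuously differentiable and set fₜ(y) := f(g(t,·)⁻¹(y)) (the pushforward of f by g(t,·)). Then for all t ∈ ℝ and y ∈ V: (∂ₜ fₜ)(y) + D fₜ|_y (X(t,y)) = 0. -/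
/-- Corollary A.3 for functions: the pushed-forward function `fₜ = g_{t*} f`
satisfies the advection equation `(∂ₜ + ℒ_{Xₜ}) fₜ = 0`. -/
theorem advection_of_pushforward_function
    {V : Type*} [NormedAddCommGroup V] [NormedSpace ℝ V] [FiniteDimensional ℝ V]
    (g : ℝ × V → V) (hg : ContDiff ℝ 1 g)
    (ginv : ℝ × V → V) (hginv : ContDiff ℝ 1 ginv)
    (hleft : ∀ (t : ℝ) (x : V), ginv (t, g (t, x)) = x)
    (hright : ∀ (t : ℝ) (y : V), g (t, ginv (t, y)) = y)
    (X : ℝ → V → V)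
    (hX : ∀ (t : ℝ) (y : V), X t y = deriv (fun s => g (s, ginv (t, y))) t)
    (f : V → ℝ) (hf : ContDiff ℝ 1 f) :
    ∀ (t : ℝ) (y : V),
      deriv (fun τ => f (ginv (τ, y))) t
        + fderiv ℝ (fun y' => f (ginv (t, y'))) y (X t y) = 0 := by
  intro t y
  set x : V := ginv (t, y) with hx
  set F : ℝ × V → ℝ := fun p => f (ginv p) with hF
  have hFc : ContDiff ℝ 1 F := hf.comp hginv
  have hDF : HasFDerivAt F (fderiv ℝ F (t, y)) (t, y) :=
    (hFc.differentiable one_ne_zero (t, y)).hasFDerivAt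
  set DF := fderiv ℝ F (t, y) with hDFdef
  -- velocity of the flow line
  have hgx : HasFDerivAt g (fderiv ℝ g (t, x)) (t, x) :=
    (hg.differentiable one_ne_zero (t, x)).hasFDerivAt
  have hcurve : HasDerivAt (fun s => g (s, x)) (fderiv ℝ g (t, x) (1, 0)) t := by
    have hid : HasDerivAt (fun s : ℝ => (s, x)) ((1 : ℝ), (0 : V)) t := by
      simpa using HasDerivAt.prodMk (hasDerivAt_id t) (hasDerivAt_const t x)
    exact hgx.comp_hasDerivAt t hid
  have hXval : X t y = fderiv ℝ g (t, x) (1, 0) := by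
    rw [hX t y, ← hx, hcurve.deriv]
  -- the constant composite
  have hconst : ∀ s, F (s, g (s, x)) = f x := by
    intro s; simp [hF, hleft]
  have hc : HasDerivAt (fun s : ℝ => ((s, g (s, x)) : ℝ × V)) (1, X t y) t := by
    rw [hXval]; exact HasDerivAt.prodMk (hasDerivAt_id t) hcurve
  have hty : ((t, g (t, x)) : ℝ × V) = (t, y) := by
    simp [hx, hright]
  have hcomp : HasDerivAt (fun s => F (s, g (s, x))) (DF (1, X t y)) t := by
    have hDF2 : HasFDerivAt F DF (t, g (t, x)) := by rw [hty]; exact hDF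
    exact hDF2.comp_hasDerivAt t hc
  have hzero : DF (1, X t y) = 0 := by
    have h0 : HasDerivAt (fun s => F (s, g (s, x))) 0 t := by
      have : (fun s => F (s, g (s, x))) = fun _ => f x := funext hconst
      rw [this]; exact hasDerivAt_const t (f x)
    exact hcomp.unique h0
  -- partial derivatives
  have hτ : HasDerivAt (fun τ => F (τ, y)) (DF (1, 0)) t := by
    have hid : HasDerivAt (fun τ : ℝ => (τ, y)) ((1 : ℝ), (0 : V)) t := by
      simpa using HasDerivAt.prodMk (hasDerivAt_id t) (hasDerivAt_const t y)
    exact hDF.comp_hasDerivAt t hid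
  have hy' : HasFDerivAt (fun y' => F (t, y')) (DF.comp (ContinuousLinearMap.inr ℝ ℝ V)) y := by
    have hincl : HasFDerivAt (fun y' : V => ((t, y') : ℝ × V))
        (ContinuousLinearMap.inr ℝ ℝ V) y := by
      exact HasFDerivAt.prodMk (hasFDerivAt_const t y) (hasFDerivAt_id y)
    exact hDF.comp y hincl
  have e1 : deriv (fun τ => f (ginv (τ, y))) t = DF (1, 0) := hτ.deriv
  have e2 : fderiv ℝ (fun y' => f (ginv (t, y'))) y (X t y) = DF (0, X t y) := by
    rw [hy'.fderiv]; rfl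
  have hsplit : ((1 : ℝ), X t y) = ((1 : ℝ), (0 : V)) + ((0 : ℝ), X t y) := by simp
  rw [hsplit, map_add] at hzero
  rw [e1, e2]
  linarith
end

section
/- (Proposition A.4 of the paper: derivative of the vector fields of a two-parameter family of diffeomorphisms.) Let V be a finite-dimensional real normed vector space and let g : ℝ × ℝ × V → V, (t,s,x) ↦ g_{t,s}(x), be twice continuously differentiable with each g_{t,s} : V → V a diffeomorphism. Define the two-parameter Eulerian vector fields X_{t,s}(y) := (∂ₜ g_{t,s})(g_{t,s}⁻¹(y)) and Y_{t,s}(y) := (∂ₛ g_{t,s})(g_{t,s}⁻¹(y)). Then for all t, s and all y ∈ V: ∂ₛ X_{t,s}(y) − ∂ₜ Y_{t,s}(y) = [X_{t,s}, Y_{t,s}](y), where the Lie bracket of vector fields is [X,Y](y) := D Y|_y (X(y)) − D X|_y (Y(y)). -/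
/-- Proposition A.4: derivative of the vector fields of a two-parameter family
of diffeomorphisms: `∂ₛX_{t,s} − ∂ₜY_{t,s} = [X_{t,s}, Y_{t,s}]` with
`[X,Y](y) = DY|_y(X(y)) − DX|_y(Y(y))`. -/
theorem two_parameter_diffeomorphism_vector_fields
    {V : Type*} [NormedAddCommGroup V] [NormedSpace ℝ V] [FiniteDimensional ℝ V]
    (g : ℝ → ℝ → V → V)
    (hg : ContDiff ℝ 2 (fun p : ℝ × ℝ × V => g p.1 p.2.1 p.2.2))
    (ginv : ℝ → ℝ → V → V)
    (hginv : ContDiff ℝ 2 (fun p : ℝ × ℝ × V => ginv p.1 p.2.1 p.2.2))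
    (hleft : ∀ (t s : ℝ) (x : V), ginv t s (g t s x) = x)
    (hright : ∀ (t s : ℝ) (y : V), g t s (ginv t s y) = y)
    (X Y : ℝ → ℝ → V → V)
    (hX : ∀ (t s : ℝ) (y : V), X t s y = deriv (fun τ => g τ s (ginv t s y)) t)
    (hY : ∀ (t s : ℝ) (y : V), Y t s y = deriv (fun σ => g t σ (ginv t s y)) s) :
    ∀ (t s : ℝ) (y : V),
      deriv (fun σ => X t σ y) s - deriv (fun τ => Y τ s y) t
        = fderiv ℝ (Y t s) y (X t s y) - fderiv ℝ (X t s) y (Y t s y) := by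
  intro t s y
  set G : ℝ × ℝ × V → V := fun p => g p.1 p.2.1 p.2.2 with hGdef
  set Hm : ℝ × ℝ × V → V := fun p => ginv p.1 p.2.1 p.2.2 with hHdef
  have hGd : Differentiable ℝ G := hg.differentiable (by norm_num)
  have hHd : Differentiable ℝ Hm := hginv.differentiable (by norm_num)
  set D := fderiv ℝ G with hDdef
  have hD1 : ContDiff ℝ 1 D := hg.fderiv_right (by norm_num)
  have hDd : Differentiable ℝ D := hD1.differentiable (by norm_num)
  set u := ginv t s y with hu
  set p₀ : ℝ × ℝ × V := (t, s, u) with hp₀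
  set B := fderiv ℝ D p₀ with hB
  -- symmetry of the second derivative
  have hsymm : ∀ v w, B v w = B w v := fun v w =>
    second_derivative_symmetric (fun q => (hGd q).hasFDerivAt) (hDd p₀).hasFDerivAt v w
  -- formulas for X and Y in terms of D
  have hX' : ∀ (t' s' : ℝ) (y' : V),
      X t' s' y' = D (t', s', ginv t' s' y') ((1:ℝ), (0:ℝ), (0:V)) := by
    intro t' s' y'
    rw [hX t' s' y']
    have h : HasDerivAt (fun τ => g τ s' (ginv t' s' y'))
        (D (t', s', ginv t' s' y') ((1:ℝ), (0:ℝ), (0:V))) t' := by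
      have h0 := (hGd (t', s', ginv t' s' y')).hasFDerivAt.comp_hasDerivAt t'
        ((hasDerivAt_id t').prodMk ((hasDerivAt_const t' s').prodMk
          (hasDerivAt_const t' (ginv t' s' y'))))
      exact h0
    exact h.deriv
  have hY' : ∀ (t' s' : ℝ) (y' : V),
      Y t' s' y' = D (t', s', ginv t' s' y') ((0:ℝ), (1:ℝ), (0:V)) := by
    intro t' s' y'
    rw [hY t' s' y']
    have h : HasDerivAt (fun σ => g t' σ (ginv t' s' y'))
        (D (t', s', ginv t' s' y') ((0:ℝ), (1:ℝ), (0:V))) s' := by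
      have h0 := (hGd (t', s', ginv t' s' y')).hasFDerivAt.comp_hasDerivAt s'
        ((hasDerivAt_const s' t').prodMk ((hasDerivAt_id s').prodMk
          (hasDerivAt_const s' (ginv t' s' y'))))
      exact h0
    exact h.deriv
  -- derivatives of the inverse flow
  have haD : HasDerivAt (fun σ => ginv t σ y) (fderiv ℝ Hm (t, s, y) ((0:ℝ), (1:ℝ), (0:V))) s := by
    have h0 := (hHd (t, s, y)).hasFDerivAt.comp_hasDerivAt s
      ((hasDerivAt_const s t).prodMk ((hasDerivAt_id s).prodMk (hasDerivAt_const s y)))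
    exact h0
  set a := fderiv ℝ Hm (t, s, y) ((0:ℝ), (1:ℝ), (0:V)) with ha
  have hbD : HasDerivAt (fun τ => ginv τ s y) (fderiv ℝ Hm (t, s, y) ((1:ℝ), (0:ℝ), (0:V))) t := by
    have h0 := (hHd (t, s, y)).hasFDerivAt.comp_hasDerivAt t
      ((hasDerivAt_id t).prodMk ((hasDerivAt_const t s).prodMk (hasDerivAt_const t y)))
    exact h0
  set b := fderiv ℝ Hm (t, s, y) ((1:ℝ), (0:ℝ), (0:V)) with hb
  -- differentiating `g t σ (ginv t σ y) = y` in σ and τ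
  have hzero2 : D p₀ ((0:ℝ), (1:ℝ), a) = 0 := by
    have h1 : HasDerivAt (fun σ => g t σ (ginv t σ y)) (D p₀ ((0:ℝ), (1:ℝ), a)) s := by
      have h0 := (hGd p₀).hasFDerivAt.comp_hasDerivAt s
        ((hasDerivAt_const s t).prodMk ((hasDerivAt_id s).prodMk haD))
      exact h0
    have h2 : (fun σ => g t σ (ginv t σ y)) = fun _ => y := funext fun σ => hright t σ y
    rw [h2] at h1
    exact h1.unique (hasDerivAt_const s y)
  have hzero1 : D p₀ ((1:ℝ), (0:ℝ), b) = 0 := by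
    have h1 : HasDerivAt (fun τ => g τ s (ginv τ s y)) (D p₀ ((1:ℝ), (0:ℝ), b)) t := by
      have h0 := (hGd p₀).hasFDerivAt.comp_hasDerivAt t
        ((hasDerivAt_id t).prodMk ((hasDerivAt_const t s).prodMk hbD))
      exact h0
    have h2 : (fun τ => g τ s (ginv τ s y)) = fun _ => y := funext fun τ => hright τ s y
    rw [h2] at h1
    exact h1.unique (hasDerivAt_const t y)
  -- inclusion x ↦ (t', s', x)
  set L0 : V →L[ℝ] ℝ × ℝ × V :=
    (0 : V →L[ℝ] ℝ).prod ((0 : V →L[ℝ] ℝ).prod (ContinuousLinearMap.id ℝ V)) with hL0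
  have hincl : ∀ (t' s' : ℝ) (y' : V),
      HasFDerivAt (fun z : V => ((t', s', z) : ℝ × ℝ × V)) L0 y' := fun t' s' y' =>
    (hasFDerivAt_const t' y').prodMk ((hasFDerivAt_const s' y').prodMk (hasFDerivAt_id y'))
  set Dφ : V →L[ℝ] V := (fderiv ℝ Hm (t, s, y)).comp L0 with hDφ
  have hφat : HasFDerivAt (fun y' => ginv t s y') Dφ y := by
    have h0 := (hHd (t, s, y)).hasFDerivAt.comp y (hincl t s y)
    exact h0
  set Dgu : V →L[ℝ] V := (D p₀).comp L0 with hDgu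
  have hψat : HasFDerivAt (fun x => g t s x) Dgu u := by
    have h0 := (hGd p₀).hasFDerivAt.comp u (hincl t s u)
    exact h0
  -- Dφ inverts Dgu
  have hgu : g t s u = y := hright t s y
  have hDinv : ∀ v, Dφ (Dgu v) = v := by
    intro v
    have hφat' : HasFDerivAt (fun y' => ginv t s y') Dφ (g t s u) := by rw [hgu]; exact hφat
    have hcomp : HasFDerivAt (fun x => ginv t s (g t s x)) (Dφ.comp Dgu) u := hφat'.comp u hψat
    have h2 : (fun x => ginv t s (g t s x)) = fun x => x := funext fun x => hleft t s x
    rw [h2] at hcomp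
    have h3 := hcomp.unique (hasFDerivAt_id u)
    calc Dφ (Dgu v) = (Dφ.comp Dgu) v := rfl
      _ = v := by rw [h3]; rfl
  -- derivative of X in σ
  have hFat1 : HasFDerivAt (fun q => D q ((1:ℝ), (0:ℝ), (0:V)))
      ((ContinuousLinearMap.apply ℝ V ((1:ℝ), (0:ℝ), (0:V))).comp B) p₀ :=
    (ContinuousLinearMap.apply ℝ V ((1:ℝ), (0:ℝ), (0:V))).hasFDerivAt.comp p₀ (hDd p₀).hasFDerivAt
  have hFat2 : HasFDerivAt (fun q => D q ((0:ℝ), (1:ℝ), (0:V)))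
      ((ContinuousLinearMap.apply ℝ V ((0:ℝ), (1:ℝ), (0:V))).comp B) p₀ :=
    (ContinuousLinearMap.apply ℝ V ((0:ℝ), (1:ℝ), (0:V))).hasFDerivAt.comp p₀ (hDd p₀).hasFDerivAt
  have hXs : HasDerivAt (fun σ => X t σ y) (B ((0:ℝ), (1:ℝ), a) ((1:ℝ), (0:ℝ), (0:V))) s := by
    have hcurve : HasDerivAt (fun σ => ((t, σ, ginv t σ y) : ℝ × ℝ × V)) ((0:ℝ), (1:ℝ), a) s :=
      (hasDerivAt_const s t).prodMk ((hasDerivAt_id s).prodMk haD)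
    have h := hFat1.comp_hasDerivAt s hcurve
    have hfun : (fun σ => X t σ y) = fun σ => D (t, σ, ginv t σ y) ((1:ℝ), (0:ℝ), (0:V)) :=
      funext fun σ => hX' t σ y
    rw [hfun]
    exact h
  have hYt : HasDerivAt (fun τ => Y τ s y) (B ((1:ℝ), (0:ℝ), b) ((0:ℝ), (1:ℝ), (0:V))) t := by
    have hcurve : HasDerivAt (fun τ => ((τ, s, ginv τ s y) : ℝ × ℝ × V)) ((1:ℝ), (0:ℝ), b) t :=
      (hasDerivAt_id t).prodMk ((hasDerivAt_const t s).prodMk hbD)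
    have h := hFat2.comp_hasDerivAt t hcurve
    have hfun : (fun τ => Y τ s y) = fun τ => D (τ, s, ginv τ s y) ((0:ℝ), (1:ℝ), (0:V)) :=
      funext fun τ => hY' τ s y
    rw [hfun]
    exact h
  -- spatial derivatives of X t s and Y t s
  set M : V →L[ℝ] ℝ × ℝ × V := (0 : V →L[ℝ] ℝ).prod ((0 : V →L[ℝ] ℝ).prod Dφ) with hM
  have hm : HasFDerivAt (fun y' => ((t, s, ginv t s y') : ℝ × ℝ × V)) M y :=
    (hasFDerivAt_const t y).prodMk ((hasFDerivAt_const s y).prodMk hφat)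
  have hXyat : HasFDerivAt (X t s)
      (((ContinuousLinearMap.apply ℝ V ((1:ℝ), (0:ℝ), (0:V))).comp B).comp M) y := by
    have h := hFat1.comp y hm
    have hfun : X t s = fun y' => D (t, s, ginv t s y') ((1:ℝ), (0:ℝ), (0:V)) :=
      funext fun y' => hX' t s y'
    rw [hfun]
    exact h
  have hYyat : HasFDerivAt (Y t s)
      (((ContinuousLinearMap.apply ℝ V ((0:ℝ), (1:ℝ), (0:V))).comp B).comp M) y := by
    have h := hFat2.comp y hm
    have hfun : Y t s = fun y' => D (t, s, ginv t s y') ((0:ℝ), (1:ℝ), (0:V)) :=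
      funext fun y' => hY' t s y'
    rw [hfun]
    exact h
  -- values of Dφ on X and Y
  have hcX : Dφ (X t s y) = -b := by
    have hXval : X t s y = D p₀ ((1:ℝ), (0:ℝ), (0:V)) := hX' t s y
    have hsum : D p₀ ((1:ℝ), (0:ℝ), (0:V)) + D p₀ ((0:ℝ), (0:ℝ), b) = 0 := by
      rw [← map_add]
      have : ((1:ℝ), (0:ℝ), (0:V)) + ((0:ℝ), (0:ℝ), b) = ((1:ℝ), (0:ℝ), b) := by simp
      rw [this]; exact hzero1
    have h1 : D p₀ ((1:ℝ), (0:ℝ), (0:V)) = -(Dgu b) := by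
      have : Dgu b = D p₀ ((0:ℝ), (0:ℝ), b) := rfl
      rw [this]; exact eq_neg_of_add_eq_zero_left hsum
    rw [hXval, h1, map_neg, hDinv]
  have hcY : Dφ (Y t s y) = -a := by
    have hYval : Y t s y = D p₀ ((0:ℝ), (1:ℝ), (0:V)) := hY' t s y
    have hsum : D p₀ ((0:ℝ), (1:ℝ), (0:V)) + D p₀ ((0:ℝ), (0:ℝ), a) = 0 := by
      rw [← map_add]
      have : ((0:ℝ), (1:ℝ), (0:V)) + ((0:ℝ), (0:ℝ), a) = ((0:ℝ), (1:ℝ), a) := by simp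
      rw [this]; exact hzero2
    have h1 : D p₀ ((0:ℝ), (1:ℝ), (0:V)) = -(Dgu a) := by
      have : Dgu a = D p₀ ((0:ℝ), (0:ℝ), a) := rfl
      rw [this]; exact eq_neg_of_add_eq_zero_left hsum
    rw [hYval, h1, map_neg, hDinv]
  -- assemble
  rw [hXs.deriv, hYt.deriv, hXyat.fderiv, hYyat.fderiv]
  have hR1 : (((ContinuousLinearMap.apply ℝ V ((0:ℝ), (1:ℝ), (0:V))).comp B).comp M) (X t s y)
      = B ((0:ℝ), (0:ℝ), (-b : V)) ((0:ℝ), (1:ℝ), (0:V)) := by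
    have h0 : (((ContinuousLinearMap.apply ℝ V ((0:ℝ), (1:ℝ), (0:V))).comp B).comp M) (X t s y)
        = B ((0:ℝ), (0:ℝ), Dφ (X t s y)) ((0:ℝ), (1:ℝ), (0:V)) := rfl
    rw [h0, hcX]
  have hR2 : (((ContinuousLinearMap.apply ℝ V ((1:ℝ), (0:ℝ), (0:V))).comp B).comp M) (Y t s y)
      = B ((0:ℝ), (0:ℝ), (-a : V)) ((1:ℝ), (0:ℝ), (0:V)) := by
    have h0 : (((ContinuousLinearMap.apply ℝ V ((1:ℝ), (0:ℝ), (0:V))).comp B).comp M) (Y t s y)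
        = B ((0:ℝ), (0:ℝ), Dφ (Y t s y)) ((1:ℝ), (0:ℝ), (0:V)) := rfl
    rw [h0, hcY]
  rw [hR1, hR2]
  have hdec1 : ((0:ℝ), (1:ℝ), a) = ((0:ℝ), (1:ℝ), (0:V)) + ((0:ℝ), (0:ℝ), a) := by simp
  have hdec2 : ((1:ℝ), (0:ℝ), b) = ((1:ℝ), (0:ℝ), (0:V)) + ((0:ℝ), (0:ℝ), b) := by simp
  have hnegb : ((0:ℝ), (0:ℝ), (-b : V)) = -((0:ℝ), (0:ℝ), b) := by simp
  have hnega : ((0:ℝ), (0:ℝ), (-a : V)) = -((0:ℝ), (0:ℝ), a) := by simp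
  rw [hdec1, hdec2, hnegb, hnega, map_add, map_add, map_neg, map_neg,
    ContinuousLinearMap.add_apply, ContinuousLinearMap.add_apply,
    ContinuousLinearMap.neg_apply, ContinuousLinearMap.neg_apply,
    hsymm ((0:ℝ), (1:ℝ), (0:V)) ((1:ℝ), (0:ℝ), (0:V))]
  abel
end

section
/- (Local conservation of energy density for the Vlasov–Maxwell system.) Assume F, E, B satisfy the Vlasov equation ∂_t F + ∇ₓ·(vF) + ∇ᵥ·((e/m)(E+v×B)F) = 0 together with Maxwell's equations ε₀ ∂_t E + j = μ₀⁻¹ ∇×B and ∂_t B + ∇×E = 0. Then for every t, x: ∂_t ( ∫_{ℝ³} ½ m ‖v‖² F dv + ½ ε₀ ‖E‖² + ½ μ₀⁻¹ ‖B‖² ) + ∇·( ∫_{ℝ³} ½ m ‖v‖² v F dv + μ₀⁻¹ E × B ) = 0. -/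
open MeasureTheory

noncomputable section

/-- `ℝ³` as `Fin 3 → ℝ`. -/
abbrev R3 : Type := Fin 3 → ℝ

/-- Euclidean inner product on `ℝ³`. -/
def dot3 (a b : R3) : ℝ := ∑ i, a i * b i

/-- Cross product on `ℝ³`. -/
def cross3 (a b : R3) : R3 :=
  ![a 1 * b 2 - a 2 * b 1, a 2 * b 0 - a 0 * b 2, a 0 * b 1 - a 1 * b 0]

/-- Euclidean norm on `ℝ³`. -/
def norm3 (a : R3) : ℝ := Real.sqrt (dot3 a a)

/-- Partial derivative in the `i`-th coordinate direction. -/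
def pd (i : Fin 3) (f : R3 → ℝ) (x : R3) : ℝ := fderiv ℝ f x (Pi.single i 1)

/-- Curl of a vector field on `ℝ³`. -/
def curl3 (u : R3 → R3) (x : R3) : R3 :=
  ![pd 1 (fun y => u y 2) x - pd 2 (fun y => u y 1) x,
    pd 2 (fun y => u y 0) x - pd 0 (fun y => u y 2) x,
    pd 0 (fun y => u y 1) x - pd 1 (fun y => u y 0) x]

/-! ### Auxiliary lemmas -/

open Set

lemma norm_le_norm3 (v : R3) : ‖v‖ ≤ norm3 v := by
  have h0 : 0 ≤ norm3 v := Real.sqrt_nonneg _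
  rw [pi_norm_le_iff_of_nonneg h0]
  intro i
  rw [Real.norm_eq_abs, ← Real.sqrt_sq_eq_abs]
  apply Real.sqrt_le_sqrt
  rw [sq, dot3]
  exact Finset.single_le_sum (f := fun j => v j * v j)
    (fun j _ => mul_self_nonneg _) (Finset.mem_univ i)

lemma integrable_of_supp {E : Type*} [NormedAddCommGroup E] [NormedSpace ℝ E]
    {R : ℝ} (f : R3 → E) (hf : Continuous f)
    (h : ∀ v : R3, R ≤ ‖v‖ → f v = 0) : Integrable f := by
  apply hf.integrable_of_hasCompactSupport
  apply HasCompactSupport.intro (isCompact_closedBall (0:R3) R)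
  intro v hv
  apply h
  simp only [Metric.mem_closedBall, dist_zero_right, not_le] at hv
  linarith

lemma fderiv_zero_of_far {H E : Type*} [NormedAddCommGroup H] [NormedSpace ℝ H]
    [NormedAddCommGroup E] [NormedSpace ℝ E]
    {R : ℝ} {g : H → E} (hsupp : ∀ v : H, R ≤ ‖v‖ → g v = 0) {v : H}
    (hv : R < ‖v‖) : fderiv ℝ g v = 0 := by
  have hev : g =ᶠ[nhds v] fun _ => (0:E) := by
    filter_upwards [IsOpen.mem_nhds (isOpen_lt continuous_const continuous_norm) hv] with w hw
    exact hsupp w hw.le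
  rw [hev.fderiv_eq, fderiv_fun_const]
  rfl

abbrev inl3 : (ℝ × R3) →L[ℝ] ((ℝ × R3) × R3) := ContinuousLinearMap.inl ℝ (ℝ × R3) R3

lemma hasFDerivAt_mkpair (v : R3) (p : ℝ × R3) :
    HasFDerivAt (fun q : ℝ × R3 => (q, v)) (inl3 : (ℝ × R3) →L[ℝ] ((ℝ × R3) × R3)) p := by
  have h := (hasFDerivAt_id (𝕜 := ℝ) p).prodMk (hasFDerivAt_const (𝕜 := ℝ) v p)
  exact h

lemma key {Φ : (ℝ × R3) × R3 → ℝ} (hΦ : ContDiff ℝ 1 Φ) {R : ℝ} (hR : 0 < R)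
    (hsupp : ∀ (p : ℝ × R3) (v : R3), R ≤ ‖v‖ → Φ (p, v) = 0) (p₀ : ℝ × R3) :
    Integrable (fun v : R3 => (fderiv ℝ Φ (p₀, v)).comp inl3) ∧
    HasFDerivAt (fun p => ∫ v : R3, Φ (p, v))
      (∫ v : R3, (fderiv ℝ Φ (p₀, v)).comp inl3) p₀ := by
  have hΦc : Continuous Φ := hΦ.continuous
  have hdc : Continuous (fderiv ℝ Φ) := hΦ.continuous_fderiv one_ne_zero
  have hdz : ∀ (p : ℝ × R3) (v : R3), R < ‖v‖ → fderiv ℝ Φ (p, v) = 0 := by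
    intro p v hv
    have hev : Φ =ᶠ[nhds (p, v)] fun _ => (0:ℝ) := by
      have ho : IsOpen {q : (ℝ × R3) × R3 | R < ‖q.2‖} :=
        isOpen_lt continuous_const (continuous_norm.comp continuous_snd)
      filter_upwards [ho.mem_nhds hv] with q hq
      exact hsupp q.1 q.2 (le_of_lt hq)
    rw [hev.fderiv_eq, fderiv_fun_const]
    rfl
  have hcompnorm : ∀ L : ((ℝ × R3) × R3) →L[ℝ] ℝ, ‖L.comp inl3‖ ≤ ‖L‖ := by
    intro L
    apply ContinuousLinearMap.opNorm_le_bound _ (norm_nonneg L)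
    intro u
    have h1 : ‖(inl3 : (ℝ × R3) →L[ℝ] _) u‖ = ‖u‖ := by
      simp [ContinuousLinearMap.inl_apply, Prod.norm_def]
    calc ‖L.comp inl3 u‖ = ‖L (inl3 u)‖ := rfl
      _ ≤ ‖L‖ * ‖inl3 u‖ := L.le_opNorm _
      _ = ‖L‖ * ‖u‖ := by rw [h1]
  obtain ⟨C, hC⟩ := ((isCompact_closedBall p₀ 1).prod
    (isCompact_closedBall (0:R3) (R+1))).exists_bound_of_continuousOn hdc.continuousOn
  have h_int : Integrable (fun v : R3 => Φ (p₀, v)) :=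
    integrable_of_supp (R := R) _ (hΦc.comp (Continuous.prodMk_right p₀)) (fun v hv => hsupp p₀ v hv)
  have hF'_cont : Continuous (fun v : R3 => (fderiv ℝ Φ (p₀, v)).comp inl3) :=
    (hdc.comp (Continuous.prodMk_right p₀)).clm_comp continuous_const
  have hF'_int : Integrable (fun v : R3 => (fderiv ℝ Φ (p₀, v)).comp inl3) := by
    apply integrable_of_supp (R := R+1) _ hF'_cont
    intro v hv
    rw [hdz p₀ v (by linarith), ContinuousLinearMap.zero_comp]
  refine ⟨hF'_int, ?_⟩
  apply hasFDerivAt_integral_of_dominated_of_fderiv_le (s := Metric.ball p₀ 1)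
    (bound := (Metric.closedBall (0:R3) (R+1)).indicator (fun _ => max C 0))
    (F' := fun p v => (fderiv ℝ Φ (p, v)).comp inl3) (Metric.ball_mem_nhds _ one_pos)
  · exact .of_forall fun p => ((hΦc.comp (Continuous.prodMk_right p)).aestronglyMeasurable)
  · exact h_int
  · exact hF'_cont.aestronglyMeasurable
  · refine .of_forall fun v p hp => ?_
    by_cases hvR : ‖v‖ ≤ R + 1
    · have hmem : v ∈ Metric.closedBall (0:R3) (R+1) := by
        simpa [Metric.mem_closedBall, dist_zero_right] using hvR
      rw [Set.indicator_of_mem hmem]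
      refine (hcompnorm _).trans ?_
      refine le_trans (hC _ ⟨Metric.ball_subset_closedBall hp, hmem⟩) (le_max_left _ _)
    · have hmem : v ∉ Metric.closedBall (0:R3) (R+1) := by
        simpa [Metric.mem_closedBall, dist_zero_right] using hvR
      rw [Set.indicator_of_notMem hmem, hdz p v (by push_neg at hvR; linarith),
        ContinuousLinearMap.zero_comp]
      simp
  · exact ((integrableOn_const measure_closedBall_lt_top.ne).integrable_indicator
      measurableSet_closedBall)
  · refine .of_forall fun v p hp => ?_
    exact ((hΦ.differentiable one_ne_zero (p, v)).hasFDerivAt).comp p (hasFDerivAt_mkpair v p)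

lemma key_deriv {Φ : (ℝ × R3) × R3 → ℝ} (hΦ : ContDiff ℝ 1 Φ) {R : ℝ} (hR : 0 < R)
    (hsupp : ∀ (p : ℝ × R3) (v : R3), R ≤ ‖v‖ → Φ (p, v) = 0) (t : ℝ) (x : R3) :
    HasDerivAt (fun τ => ∫ v : R3, Φ ((τ, x), v))
      (∫ v : R3, deriv (fun τ => Φ ((τ, x), v)) t) t := by
  obtain ⟨hint, hfd⟩ := key hΦ hR hsupp (t, x)
  have hc : HasDerivAt (fun τ : ℝ => ((τ, x) : ℝ × R3)) (1, 0) t :=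
    (hasDerivAt_id t).prodMk (hasDerivAt_const t x)
  have h1 := hfd.comp_hasDerivAt t hc
  rw [ContinuousLinearMap.integral_apply hint] at h1
  have heq : ∀ v : R3, ((fderiv ℝ Φ ((t, x), v)).comp inl3) (1, 0)
      = deriv (fun τ => Φ ((τ, x), v)) t := by
    intro v
    have hcv : HasDerivAt (fun τ : ℝ => (((τ, x), v) : (ℝ × R3) × R3)) (((1:ℝ), (0:R3)), (0:R3)) t :=
      hc.prodMk (hasDerivAt_const t v)
    have h2 := ((hΦ.differentiable one_ne_zero ((t, x), v)).hasFDerivAt).comp_hasDerivAt t hcv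
    rw [show (fun τ => Φ ((τ, x), v)) = Φ ∘ (fun τ => ((τ, x), v)) from rfl, h2.deriv]
    simp
  simp only [heq] at h1
  exact h1

lemma key_pd {Φ : (ℝ × R3) × R3 → ℝ} (hΦ : ContDiff ℝ 1 Φ) {R : ℝ} (hR : 0 < R)
    (hsupp : ∀ (p : ℝ × R3) (v : R3), R ≤ ‖v‖ → Φ (p, v) = 0) (t : ℝ) (x : R3) :
    DifferentiableAt ℝ (fun y => ∫ v : R3, Φ ((t, y), v)) x ∧
    ∀ i : Fin 3, pd i (fun y => ∫ v : R3, Φ ((t, y), v)) x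
      = ∫ v : R3, pd i (fun y => Φ ((t, y), v)) x := by
  obtain ⟨hint, hfd⟩ := key hΦ hR hsupp (t, x)
  have hc : HasFDerivAt (fun y : R3 => ((t, y) : ℝ × R3))
      (ContinuousLinearMap.inr ℝ ℝ R3) x := by
    have h := (hasFDerivAt_const (𝕜 := ℝ) t x).prodMk (hasFDerivAt_id (𝕜 := ℝ) x)
    exact h
  have h1 := hfd.comp x hc
  refine ⟨h1.differentiableAt, fun i => ?_⟩
  rw [pd, show (fun y => ∫ v : R3, Φ ((t, y), v))
      = (fun p : ℝ × R3 => ∫ v : R3, Φ (p, v)) ∘ (fun y : R3 => (t, y)) from rfl, h1.fderiv]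
  rw [ContinuousLinearMap.comp_apply, ContinuousLinearMap.inr_apply,
    ContinuousLinearMap.integral_apply hint]
  congr 1
  funext v
  have hcv : HasFDerivAt (fun y : R3 => (((t, y), v) : (ℝ × R3) × R3))
      ((ContinuousLinearMap.inr ℝ ℝ R3).prod (0 : R3 →L[ℝ] R3)) x :=
    hc.prodMk (hasFDerivAt_const v x)
  have h2 := ((hΦ.differentiable one_ne_zero ((t, x), v)).hasFDerivAt).comp x hcv
  rw [pd, show (fun y => Φ ((t, y), v)) = Φ ∘ (fun y : R3 => ((t, y), v)) from rfl, h2.fderiv]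
  simp

lemma pd_continuous {g : R3 → ℝ} (hg : ContDiff ℝ 1 g) (i : Fin 3) :
    Continuous (fun y => pd i g y) :=
  (ContinuousLinearMap.apply ℝ ℝ (Pi.single i 1 : R3)).continuous.comp
    (hg.continuous_fderiv one_ne_zero)

lemma integral_pd_eq_zero {g : R3 → ℝ} (hg : ContDiff ℝ 1 g) {R : ℝ} (hR : 0 < R)
    (hsupp : ∀ v : R3, R ≤ ‖v‖ → g v = 0) (i : Fin 3) :
    ∫ v : R3, pd i g v = 0 := by
  set L := R + 1 with hL
  have hL0 : 0 < L := by linarith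
  set a : R3 := fun _ => -L with ha
  set b : R3 := fun _ => L with hb
  have hle : a ≤ b := fun j => by simp only [a, b]; linarith
  set f : Fin 3 → R3 → ℝ := fun j y => if j = i then g y else 0 with hf
  set f' : Fin 3 → R3 → R3 →L[ℝ] ℝ := fun j y => if j = i then fderiv ℝ g y else 0 with hf'
  have hdiv : ∀ y : R3, (∑ j, f' j y (Pi.single j 1)) = pd i g y := by
    intro y
    rw [Finset.sum_eq_single i]
    · simp [f', pd]
    · intro j _ hj; simp [f', hj]
    · simp
  have key3 := MeasureTheory.integral_divergence_of_hasFDerivAt_off_countable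
    (n := 2) a b hle (fun y j => f j y) (fun y => ContinuousLinearMap.pi fun j => f' j y)
    ∅ countable_empty
    (by
      apply continuousOn_pi.2
      intro j
      by_cases hj : j = i
      · simp only [f, hj, if_pos rfl]; exact hg.continuous.continuousOn
      · simp only [f, if_neg hj]; exact continuousOn_const)
    (fun y _ => by
      apply hasFDerivAt_pi.2
      intro j
      by_cases hj : j = i
      · subst hj; simp only [f, f', if_pos rfl]
        exact (hg.differentiable one_ne_zero y).hasFDerivAt
      · simp only [f, f', if_neg hj]; exact hasFDerivAt_const 0 y)
    (by
      apply (ContinuousOn.integrableOn_compact isCompact_Icc)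
      refine ((pd_continuous hg i).congr ?_).continuousOn
      intro y
      exact ((hdiv y).symm.trans (by simp)))
  have hface : ∀ (j : Fin 3) (c : ℝ), L ≤ |c| →
      ∀ z : Fin 2 → ℝ, f j (Fin.insertNth (n := 2) (α := fun _ => ℝ) j c z) = 0 := by
    intro j c hc z
    by_cases hj : j = i
    · simp only [f, if_pos hj]
      apply hsupp
      calc R ≤ |c| := by linarith [abs_nonneg c]
      _ = ‖(Fin.insertNth (n := 2) (α := fun _ => ℝ) j c z) j‖ := by
          rw [Fin.insertNth_apply_same]; simp
      _ ≤ ‖Fin.insertNth (n := 2) (α := fun _ => ℝ) j c z‖ := norm_le_pi_norm _ j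
    · simp [f, hj]
  have hsub : Function.support (fun y => pd i g y) ⊆ Icc a b := by
    intro y hy
    by_contra hmem
    apply hy
    have hRy : R < ‖y‖ := by
      simp only [Set.mem_Icc, Pi.le_def, not_and_or, not_forall, a, b] at hmem
      have hj : ∃ j, L < |y j| := by
        rcases hmem with ⟨j, hj⟩ | ⟨j, hj⟩
        · exact ⟨j, lt_abs.2 (Or.inr (by push_neg at hj; linarith))⟩
        · exact ⟨j, lt_abs.2 (Or.inl (by push_neg at hj; linarith))⟩
      obtain ⟨j, hj⟩ := hj
      calc R < L := by linarith
        _ < |y j| := hj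
        _ ≤ ‖y‖ := by rw [← Real.norm_eq_abs]; exact norm_le_pi_norm y j
    show fderiv ℝ g y (Pi.single i 1) = 0
    rw [fderiv_zero_of_far hsupp hRy]
    simp
  calc ∫ v : R3, pd i g v = ∫ v in Icc a b, pd i g v := by
        rw [← integral_indicator measurableSet_Icc, indicator_eq_self.2 hsub]
    _ = ∫ y in Icc a b, ∑ j, (ContinuousLinearMap.pi fun j => f' j y) (Pi.single j 1) j := by
        apply setIntegral_congr_fun measurableSet_Icc
        intro y _
        rw [← hdiv y]
        simp
    _ = _ := key3
    _ = 0 := by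
        apply Finset.sum_eq_zero
        intro j _
        have h1 : ∀ z ∈ Icc (a ∘ j.succAbove) (b ∘ j.succAbove),
            (fun y (k : Fin 3) => f k y) (j.insertNth (b j) z) j = (0:ℝ) := by
          intro z _
          exact hface j (b j) (by simp [b, abs_of_pos hL0]) z
        have h2 : ∀ z ∈ Icc (a ∘ j.succAbove) (b ∘ j.succAbove),
            (fun y (k : Fin 3) => f k y) (j.insertNth (a j) z) j = (0:ℝ) := by
          intro z _
          exact hface j (a j) (by simp [a, abs_of_pos hL0]) z
        rw [setIntegral_congr_fun measurableSet_Icc h1,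
          setIntegral_congr_fun measurableSet_Icc h2]
        simp

lemma pd_add {f g : R3 → ℝ} {x : R3} (hf : DifferentiableAt ℝ f x)
    (hg : DifferentiableAt ℝ g x) (i : Fin 3) :
    pd i (fun y => f y + g y) x = pd i f x + pd i g x := by
  unfold pd
  rw [fderiv_fun_add hf hg]
  simp

lemma pd_mul {f g : R3 → ℝ} {x : R3} (hf : DifferentiableAt ℝ f x)
    (hg : DifferentiableAt ℝ g x) (i : Fin 3) :
    pd i (fun y => f y * g y) x = pd i f x * g x + f x * pd i g x := by
  unfold pd
  rw [fderiv_fun_mul hf hg]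
  simp
  ring

lemma pd_const_mul {f : R3 → ℝ} {x : R3} (hf : DifferentiableAt ℝ f x) (c : ℝ) (i : Fin 3) :
    pd i (fun y => c * f y) x = c * pd i f x := by
  unfold pd
  rw [fderiv_const_mul hf]
  simp

lemma pd_sub {f g : R3 → ℝ} {x : R3} (hf : DifferentiableAt ℝ f x)
    (hg : DifferentiableAt ℝ g x) (i : Fin 3) :
    pd i (fun y => f y - g y) x = pd i f x - pd i g x := by
  unfold pd
  rw [fderiv_fun_sub hf hg]
  simp

lemma pd_sum {f : Fin 3 → R3 → ℝ} {x : R3} (hf : ∀ j, DifferentiableAt ℝ (f j) x) (i : Fin 3) :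
    pd i (fun y => ∑ j, f j y) x = ∑ j, pd i (f j) x := by
  unfold pd
  rw [fderiv_fun_sum (fun j _ => hf j)]
  simp

lemma pd_coord (i j : Fin 3) (x : R3) :
    pd i (fun y : R3 => y j) x = if j = i then 1 else 0 := by
  unfold pd
  rw [show (fun y : R3 => y j) = fun y => (ContinuousLinearMap.proj j : R3 →L[ℝ] ℝ) y from rfl,
    (ContinuousLinearMap.proj j : R3 →L[ℝ] ℝ).fderiv]
  simp [Pi.single_apply]

lemma diffAt_coord (j : Fin 3) (x : R3) : DifferentiableAt ℝ (fun y : R3 => y j) x :=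
  (ContinuousLinearMap.proj j : R3 →L[ℝ] ℝ).differentiableAt

lemma pd_halfmsq (m : ℝ) (i : Fin 3) (v : R3) :
    pd i (fun w : R3 => 1/2 * m * dot3 w w) v = m * v i := by
  have h1 : pd i (fun w : R3 => dot3 w w) v = 2 * v i := by
    unfold dot3
    rw [pd_sum (fun j => (diffAt_coord j v).fun_mul (diffAt_coord j v))]
    rw [Fin.sum_univ_three]
    fin_cases i <;>
      simp [pd_mul (diffAt_coord _ _) (diffAt_coord _ _), pd_coord, Fin.ext_iff] <;> ring
  have h2 : DifferentiableAt ℝ (fun w : R3 => dot3 w w) v := by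
    unfold dot3
    exact DifferentiableAt.fun_sum fun j _ => (diffAt_coord j v).fun_mul (diffAt_coord j v)
  rw [pd_const_mul h2, h1]
  ring

lemma diffAt_dot3 (v : R3) : DifferentiableAt ℝ (fun w : R3 => dot3 w w) v := by
  unfold dot3
  exact DifferentiableAt.fun_sum fun j _ => (diffAt_coord j v).fun_mul (diffAt_coord j v)

/-- Local conservation of energy density for the Vlasov–Maxwell system. -/
theorem vlasov_maxwell_energy_conservation
    (m e ε₀ μ₀ : ℝ) (hm : 0 < m) (he : 0 < e) (hε : 0 < ε₀) (hμ : 0 < μ₀)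
    (F : ℝ → R3 → R3 → ℝ) (E B : ℝ → R3 → R3)
    (hF : ContDiff ℝ 1 (fun p : ℝ × R3 × R3 => F p.1 p.2.1 p.2.2))
    (hE : ContDiff ℝ 1 (fun p : ℝ × R3 => E p.1 p.2))
    (hB : ContDiff ℝ 1 (fun p : ℝ × R3 => B p.1 p.2))
    (R : ℝ) (hR : 0 < R)
    (hsupp : ∀ (t : ℝ) (x v : R3), R ≤ norm3 v → F t x v = 0)
    (hVlasov : ∀ (t : ℝ) (x v : R3),
      deriv (fun τ => F τ x v) t
        + (∑ i, pd i (fun y => v i * F t y v) x)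
        + (∑ i, pd i (fun w => e / m * (E t x i + cross3 w (B t x) i) * F t x w) v)
        = 0)
    (hAmpere : ∀ (t : ℝ) (x : R3) (i : Fin 3),
      ε₀ * deriv (fun τ => E τ x i) t + (e * ∫ v : R3, v i * F t x v)
        = μ₀⁻¹ * curl3 (B t) x i)
    (hFaraday : ∀ (t : ℝ) (x : R3) (i : Fin 3),
      deriv (fun τ => B τ x i) t + curl3 (E t) x i = 0) :
    ∀ (t : ℝ) (x : R3),
      deriv (fun τ =>
          (∫ v : R3, 1 / 2 * m * dot3 v v * F τ x v)
            + 1 / 2 * ε₀ * dot3 (E τ x) (E τ x)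
            + 1 / 2 * μ₀⁻¹ * dot3 (B τ x) (B τ x)) t
        + (∑ i, pd i (fun y =>
            (∫ v : R3, 1 / 2 * m * dot3 v v * v i * F t y v)
              + μ₀⁻¹ * cross3 (E t y) (B t y) i) x)
        = 0 := by
  intro t x
  -- support in sup norm
  have hsupp' : ∀ (τ : ℝ) (y v : R3), R ≤ ‖v‖ → F τ y v = 0 :=
    fun τ y v hv => hsupp τ y v (hv.trans (norm_le_norm3 v))
  -- basic ContDiff facts
  have hFq : ContDiff ℝ 1 (fun q : (ℝ × R3) × R3 => F q.1.1 q.1.2 q.2) :=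
    hF.comp ((contDiff_fst.comp contDiff_fst).prodMk
      ((contDiff_snd.comp contDiff_fst).prodMk contDiff_snd))
  have hdot_cd : ContDiff ℝ 1 (fun v : R3 => dot3 v v) := by
    unfold dot3
    exact ContDiff.sum fun j _ =>
      ((ContinuousLinearMap.proj j : R3 →L[ℝ] ℝ).contDiff).mul
        ((ContinuousLinearMap.proj j : R3 →L[ℝ] ℝ).contDiff)
  have hcoord_cd : ∀ j : Fin 3, ContDiff ℝ 1 (fun v : R3 => v j) :=
    fun j => (ContinuousLinearMap.proj j : R3 →L[ℝ] ℝ).contDiff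
  -- section differentiability
  have hFτ : ∀ v : R3, DifferentiableAt ℝ (fun τ => F τ x v) t := by
    intro v
    exact (hF.differentiable one_ne_zero (t, x, v)).comp (f := fun τ : ℝ => (τ, x, v)) t
      ((differentiableAt_id).prodMk (differentiableAt_const (x, v)))
  have hFy : ∀ v : R3, DifferentiableAt ℝ (fun y => F t y v) x := by
    intro v
    exact (hF.differentiable one_ne_zero (t, x, v)).comp (f := fun y : R3 => (t, y, v)) x
      ((differentiableAt_const t).prodMk ((differentiableAt_id).prodMk (differentiableAt_const v)))
  have hFv_cd : ContDiff ℝ 1 (fun w : R3 => F t x w) :=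
    hF.comp (contDiff_const.prodMk (contDiff_const.prodMk contDiff_id))
  -- continuity of the time derivative and space partials, in v
  have hdtF_eq : ∀ v : R3, deriv (fun τ => F τ x v) t
      = fderiv ℝ (fun p : ℝ × R3 × R3 => F p.1 p.2.1 p.2.2) (t, x, v) (1, 0, 0) := by
    intro v
    have hc : HasDerivAt (fun τ : ℝ => ((τ, x, v) : ℝ × R3 × R3)) ((1:ℝ), (0:R3), (0:R3)) t :=
      (hasDerivAt_id t).prodMk (hasDerivAt_const t (x, v))
    have h2 := ((hF.differentiable one_ne_zero (t, x, v)).hasFDerivAt).comp_hasDerivAt t hc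
    rw [show (fun τ => F τ x v)
      = (fun p : ℝ × R3 × R3 => F p.1 p.2.1 p.2.2) ∘ (fun τ => (τ, x, v)) from rfl, h2.deriv]
  have hdtF_cont : Continuous (fun v : R3 => deriv (fun τ => F τ x v) t) := by
    simp only [hdtF_eq]
    exact (ContinuousLinearMap.apply ℝ ℝ ((1:ℝ), (0:R3), (0:R3))).continuous.comp
      ((hF.continuous_fderiv one_ne_zero).comp
        (continuous_const.prodMk (continuous_const.prodMk continuous_id)))
  
  have hdxF_eq : ∀ (i : Fin 3) (v : R3), pd i (fun y => F t y v) x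
      = fderiv ℝ (fun p : ℝ × R3 × R3 => F p.1 p.2.1 p.2.2) (t, x, v) (0, Pi.single i 1, 0) := by
    intro i v
    have hc : HasFDerivAt (fun y : R3 => ((t, y, v) : ℝ × R3 × R3))
        ((0 : R3 →L[ℝ] ℝ).prod ((ContinuousLinearMap.id ℝ R3).prod (0 : R3 →L[ℝ] R3))) x :=
      (hasFDerivAt_const t x).prodMk ((hasFDerivAt_id x).prodMk (hasFDerivAt_const v x))
    have h2 := ((hF.differentiable one_ne_zero (t, x, v)).hasFDerivAt).comp x hc
    rw [pd, show (fun y => F t y v)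
      = (fun p : ℝ × R3 × R3 => F p.1 p.2.1 p.2.2) ∘ (fun y : R3 => (t, y, v)) from rfl, h2.fderiv]
    simp
  have hdxF_cont : ∀ i : Fin 3, Continuous (fun v : R3 => pd i (fun y => F t y v) x) := by
    intro i
    simp only [hdxF_eq]
    exact (ContinuousLinearMap.apply ℝ ℝ (((0:ℝ), Pi.single i 1, (0:R3)) : ℝ × R3 × R3)).continuous.comp
      ((hF.continuous_fderiv one_ne_zero).comp
        (continuous_const.prodMk (continuous_const.prodMk continuous_id)))
  have hdtF_supp : ∀ v : R3, R ≤ ‖v‖ → deriv (fun τ => F τ x v) t = 0 := by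
    intro v hv
    rw [show (fun τ => F τ x v) = (fun _ : ℝ => (0:ℝ)) from funext fun τ => hsupp' τ x v hv]
    simp
  have hdxF_supp : ∀ (i : Fin 3) (v : R3), R ≤ ‖v‖ → pd i (fun y => F t y v) x = 0 := by
    intro i v hv
    rw [pd, show (fun y => F t y v) = (fun _ : R3 => (0:ℝ)) from funext fun y => hsupp' t y v hv,
      fderiv_fun_const]
    simp
  -- the velocity-space coefficient functions
  have hcross_cd : ∀ i : Fin 3, ContDiff ℝ 1 (fun w : R3 => cross3 w (B t x) i) := by
    intro i
    fin_cases i <;>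
      · simp only [cross3, Matrix.cons_val_zero, Matrix.cons_val_one, Matrix.head_cons,
          Matrix.cons_val_two, Matrix.tail_cons]
        exact ((hcoord_cd _).mul contDiff_const).sub ((hcoord_cd _).mul contDiff_const)
  have hg_cd : ∀ i : Fin 3,
      ContDiff ℝ 1 (fun w : R3 => e / m * (E t x i + cross3 w (B t x) i) * F t x w) :=
    fun i => (contDiff_const.mul (contDiff_const.add (hcross_cd i))).mul hFv_cd
  have hg_supp : ∀ (i : Fin 3) (w : R3), R ≤ ‖w‖ →
      e / m * (E t x i + cross3 w (B t x) i) * F t x w = 0 :=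
    fun i w hw => by rw [hsupp' t x w hw, mul_zero]
  
  -- kinetic energy: time derivative under the integral
  have hΦ₁cd : ContDiff ℝ 1
      (fun q : (ℝ × R3) × R3 => 1 / 2 * m * dot3 q.2 q.2 * F q.1.1 q.1.2 q.2) :=
    (contDiff_const.mul (hdot_cd.comp contDiff_snd)).mul hFq
  have hΦ₁supp : ∀ (p : ℝ × R3) (v : R3), R ≤ ‖v‖ →
      1 / 2 * m * dot3 v v * F p.1 p.2 v = 0 :=
    fun p v hv => by rw [hsupp' p.1 p.2 v hv, mul_zero]
  have hK : HasDerivAt (fun τ => ∫ v : R3, 1 / 2 * m * dot3 v v * F τ x v)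
      (∫ v : R3, deriv (fun τ => 1 / 2 * m * dot3 v v * F τ x v) t) t :=
    key_deriv hΦ₁cd hR hΦ₁supp t x
  have hK' : HasDerivAt (fun τ => ∫ v : R3, 1 / 2 * m * dot3 v v * F τ x v)
      (∫ v : R3, 1 / 2 * m * dot3 v v * deriv (fun τ => F τ x v) t) t := by
    have hcong : (fun v : R3 => deriv (fun τ => 1 / 2 * m * dot3 v v * F τ x v) t)
        = fun v : R3 => 1 / 2 * m * dot3 v v * deriv (fun τ => F τ x v) t :=
      funext fun v => deriv_const_mul (1 / 2 * m * dot3 v v) (hFτ v)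
    rw [← hcong]
    exact hK
  -- energy flux: space derivatives under the integral
  have hΦ₂cd : ∀ i : Fin 3, ContDiff ℝ 1
      (fun q : (ℝ × R3) × R3 => 1 / 2 * m * dot3 q.2 q.2 * q.2 i * F q.1.1 q.1.2 q.2) :=
    fun i => ((contDiff_const.mul (hdot_cd.comp contDiff_snd)).mul
      ((hcoord_cd i).comp contDiff_snd)).mul hFq
  have hΦ₂supp : ∀ (i : Fin 3) (p : ℝ × R3) (v : R3), R ≤ ‖v‖ →
      1 / 2 * m * dot3 v v * v i * F p.1 p.2 v = 0 :=
    fun i p v hv => by rw [hsupp' p.1 p.2 v hv, mul_zero]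
  have hS := fun i : Fin 3 => key_pd (hΦ₂cd i) hR (hΦ₂supp i) t x
  have hSdiff : ∀ i : Fin 3,
      DifferentiableAt ℝ (fun y => ∫ v : R3, 1 / 2 * m * dot3 v v * v i * F t y v) x :=
    fun i => (hS i).1
  have hSpd : ∀ i : Fin 3, pd i (fun y => ∫ v : R3, 1 / 2 * m * dot3 v v * v i * F t y v) x
      = ∫ v : R3, 1 / 2 * m * dot3 v v * v i * pd i (fun y => F t y v) x := by
    intro i
    rw [(hS i).2 i]
    congr 1
    funext v
    exact pd_const_mul (hFy v) (1 / 2 * m * dot3 v v * v i) i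
  
  -- field time derivatives
  have hdE_t : ∀ i : Fin 3, HasDerivAt (fun τ => E τ x i) (deriv (fun τ => E τ x i) t) t := by
    intro i
    apply DifferentiableAt.hasDerivAt
    have h1 : DifferentiableAt ℝ (fun τ => E τ x) t :=
      (hE.differentiable one_ne_zero (t, x)).comp (f := fun τ : ℝ => (τ, x)) t
        ((differentiableAt_id).prodMk (differentiableAt_const x))
    exact ((ContinuousLinearMap.proj i : R3 →L[ℝ] ℝ).differentiableAt).comp t h1
  have hdB_t : ∀ i : Fin 3, HasDerivAt (fun τ => B τ x i) (deriv (fun τ => B τ x i) t) t := by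
    intro i
    apply DifferentiableAt.hasDerivAt
    have h1 : DifferentiableAt ℝ (fun τ => B τ x) t :=
      (hB.differentiable one_ne_zero (t, x)).comp (f := fun τ : ℝ => (τ, x)) t
        ((differentiableAt_id).prodMk (differentiableAt_const x))
    exact ((ContinuousLinearMap.proj i : R3 →L[ℝ] ℝ).differentiableAt).comp t h1
  -- field space derivatives
  have hdEx : ∀ j : Fin 3, DifferentiableAt ℝ (fun y => E t y j) x := by
    intro j
    have h1 : DifferentiableAt ℝ (fun y => E t y) x :=
      (hE.differentiable one_ne_zero (t, x)).comp (f := fun y : R3 => (t, y)) x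
        ((differentiableAt_const t).prodMk differentiableAt_id)
    exact ((ContinuousLinearMap.proj j : R3 →L[ℝ] ℝ).differentiableAt).comp x h1
  have hdBx : ∀ j : Fin 3, DifferentiableAt ℝ (fun y => B t y j) x := by
    intro j
    have h1 : DifferentiableAt ℝ (fun y => B t y) x :=
      (hB.differentiable one_ne_zero (t, x)).comp (f := fun y : R3 => (t, y)) x
        ((differentiableAt_const t).prodMk differentiableAt_id)
    exact ((ContinuousLinearMap.proj j : R3 →L[ℝ] ℝ).differentiableAt).comp x h1
  have hEE : HasDerivAt (fun τ => 1 / 2 * ε₀ * dot3 (E τ x) (E τ x))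
      (1 / 2 * ε₀ * (∑ i, (deriv (fun τ => E τ x i) t * E t x i
        + E t x i * deriv (fun τ => E τ x i) t))) t := by
    have h1 : HasDerivAt (fun τ => ∑ i, E τ x i * E τ x i)
        (∑ i, (deriv (fun τ => E τ x i) t * E t x i + E t x i * deriv (fun τ => E τ x i) t)) t :=
      HasDerivAt.fun_sum fun i _ => (hdE_t i).fun_mul (hdE_t i)
    exact HasDerivAt.const_mul (1 / 2 * ε₀) h1
  have hBB : HasDerivAt (fun τ => 1 / 2 * μ₀⁻¹ * dot3 (B τ x) (B τ x))
      (1 / 2 * μ₀⁻¹ * (∑ i, (deriv (fun τ => B τ x i) t * B t x i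
        + B t x i * deriv (fun τ => B τ x i) t))) t := by
    have h1 : HasDerivAt (fun τ => ∑ i, B τ x i * B τ x i)
        (∑ i, (deriv (fun τ => B τ x i) t * B t x i + B t x i * deriv (fun τ => B τ x i) t)) t :=
      HasDerivAt.fun_sum fun i _ => (hdB_t i).fun_mul (hdB_t i)
    exact HasDerivAt.const_mul (1 / 2 * μ₀⁻¹) h1
  -- Poynting flux divergence
  have hc0 : (fun y => μ₀⁻¹ * cross3 (E t y) (B t y) (0 : Fin 3))
      = fun y => μ₀⁻¹ * (E t y 1 * B t y 2 - E t y 2 * B t y 1) := by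
    funext y; simp [cross3]
  have hc1 : (fun y => μ₀⁻¹ * cross3 (E t y) (B t y) (1 : Fin 3))
      = fun y => μ₀⁻¹ * (E t y 2 * B t y 0 - E t y 0 * B t y 2) := by
    funext y; simp [cross3]
  have hc2 : (fun y => μ₀⁻¹ * cross3 (E t y) (B t y) (2 : Fin 3))
      = fun y => μ₀⁻¹ * (E t y 0 * B t y 1 - E t y 1 * B t y 0) := by
    funext y; simp [cross3]
  have hQdiff : ∀ i : Fin 3, DifferentiableAt ℝ (fun y => μ₀⁻¹ * cross3 (E t y) (B t y) i) x := by
    intro i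
    match i with
    | 0 => rw [hc0]; exact (((hdEx 1).fun_mul (hdBx 2)).fun_sub ((hdEx 2).fun_mul (hdBx 1))).const_mul μ₀⁻¹
    | 1 => rw [hc1]; exact (((hdEx 2).fun_mul (hdBx 0)).fun_sub ((hdEx 0).fun_mul (hdBx 2))).const_mul μ₀⁻¹
    | 2 => rw [hc2]; exact (((hdEx 0).fun_mul (hdBx 1)).fun_sub ((hdEx 1).fun_mul (hdBx 0))).const_mul μ₀⁻¹
  have hPoynt : (∑ i, pd i (fun y => μ₀⁻¹ * cross3 (E t y) (B t y) i) x)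
      = μ₀⁻¹ * (dot3 (B t x) (curl3 (E t) x) - dot3 (E t x) (curl3 (B t) x)) := by
    rw [Fin.sum_univ_three, hc0, hc1, hc2,
      pd_const_mul (((hdEx 1).fun_mul (hdBx 2)).fun_sub ((hdEx 2).fun_mul (hdBx 1))) μ₀⁻¹ 0,
      pd_const_mul (((hdEx 2).fun_mul (hdBx 0)).fun_sub ((hdEx 0).fun_mul (hdBx 2))) μ₀⁻¹ 1,
      pd_const_mul (((hdEx 0).fun_mul (hdBx 1)).fun_sub ((hdEx 1).fun_mul (hdBx 0))) μ₀⁻¹ 2,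
      pd_sub ((hdEx 1).fun_mul (hdBx 2)) ((hdEx 2).fun_mul (hdBx 1)) 0,
      pd_sub ((hdEx 2).fun_mul (hdBx 0)) ((hdEx 0).fun_mul (hdBx 2)) 1,
      pd_sub ((hdEx 0).fun_mul (hdBx 1)) ((hdEx 1).fun_mul (hdBx 0)) 2,
      pd_mul (hdEx 1) (hdBx 2) 0, pd_mul (hdEx 2) (hdBx 1) 0,
      pd_mul (hdEx 2) (hdBx 0) 1, pd_mul (hdEx 0) (hdBx 2) 1,
      pd_mul (hdEx 0) (hdBx 1) 2, pd_mul (hdEx 1) (hdBx 0) 2]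
    simp only [curl3, dot3, Fin.sum_univ_three, Matrix.cons_val_zero, Matrix.cons_val_one,
      Matrix.head_cons, Matrix.cons_val_two, Matrix.tail_cons]
    ring
  
  -- Vlasov with constants pulled out
  have hVl : ∀ v : R3, deriv (fun τ => F τ x v) t
      + (∑ i, v i * pd i (fun y => F t y v) x)
      + (∑ i, pd i (fun w => e / m * (E t x i + cross3 w (B t x) i) * F t x w) v) = 0 := by
    intro v
    have h0 := hVlasov t x v
    have hcm : ∀ i : Fin 3, pd i (fun y => v i * F t y v) x
        = v i * pd i (fun y => F t y v) x := fun i => pd_const_mul (hFy v) (v i) i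
    simp only [hcm] at h0
    exact h0
  -- integrability of all velocity integrands
  have hInt_t : Integrable (fun v : R3 => 1 / 2 * m * dot3 v v * deriv (fun τ => F τ x v) t) := by
    apply integrable_of_supp (R := R)
    · exact (continuous_const.mul hdot_cd.continuous).mul hdtF_cont
    · intro v hv; rw [hdtF_supp v hv, mul_zero]
  have hInt_x : ∀ i : Fin 3, Integrable
      (fun v : R3 => 1 / 2 * m * dot3 v v * v i * pd i (fun y => F t y v) x) := by
    intro i
    apply integrable_of_supp (R := R)
    · exact ((continuous_const.mul hdot_cd.continuous).mul (hcoord_cd i).continuous).mul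
        (hdxF_cont i)
    · intro v hv; rw [hdxF_supp i v hv, mul_zero]
  have hpdg_supp : ∀ (i : Fin 3) (v : R3), R + 1 ≤ ‖v‖ →
      pd i (fun w => e / m * (E t x i + cross3 w (B t x) i) * F t x w) v = 0 := by
    intro i v hv
    show fderiv ℝ _ v (Pi.single i 1) = 0
    rw [fderiv_zero_of_far (hg_supp i) (show R < ‖v‖ by linarith)]
    simp
  have hInt_b : ∀ i : Fin 3, Integrable (fun v : R3 => 1 / 2 * m * dot3 v v
      * pd i (fun w => e / m * (E t x i + cross3 w (B t x) i) * F t x w) v) := by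
    intro i
    apply integrable_of_supp (R := R + 1)
    · exact (continuous_const.mul hdot_cd.continuous).mul (pd_continuous (hg_cd i) i)
    · intro v hv; rw [hpdg_supp i v hv, mul_zero]
  have hInt_a : ∀ i : Fin 3, Integrable (fun v : R3 =>
      m * v i * (e / m * (E t x i + cross3 v (B t x) i) * F t x v)) := by
    intro i
    apply integrable_of_supp (R := R)
    · exact (continuous_const.mul (hcoord_cd i).continuous).mul (hg_cd i).continuous
    · intro v hv; rw [hsupp' t x v hv, mul_zero, mul_zero]
  have hInt_c : ∀ i : Fin 3, Integrable (fun v : R3 => E t x i * (e * (v i * F t x v))) := by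
    intro i
    apply integrable_of_supp (R := R)
    · exact continuous_const.mul (continuous_const.mul
        ((hcoord_cd i).continuous.mul hFv_cd.continuous))
    · intro v hv; rw [hsupp' t x v hv, mul_zero, mul_zero, mul_zero]
  have hInt_vF : ∀ i : Fin 3, Integrable (fun v : R3 => v i * F t x v) := by
    intro i
    apply integrable_of_supp (R := R)
    · exact (hcoord_cd i).continuous.mul hFv_cd.continuous
    · intro v hv; rw [hsupp' t x v hv, mul_zero]
  -- integration by parts in velocity
  have hψ : ∀ i : Fin 3, (∫ v : R3, pd i (fun w => 1 / 2 * m * dot3 w w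
      * (e / m * (E t x i + cross3 w (B t x) i) * F t x w)) v) = 0 := by
    intro i
    apply integral_pd_eq_zero ((contDiff_const.mul hdot_cd).mul (hg_cd i)) hR
    intro v hv
    rw [hsupp' t x v hv, mul_zero, mul_zero]
  have hpdψ : ∀ (i : Fin 3) (v : R3), pd i (fun w => 1 / 2 * m * dot3 w w
      * (e / m * (E t x i + cross3 w (B t x) i) * F t x w)) v
      = m * v i * (e / m * (E t x i + cross3 v (B t x) i) * F t x v)
        + 1 / 2 * m * dot3 v v
          * pd i (fun w => e / m * (E t x i + cross3 w (B t x) i) * F t x w) v := by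
    intro i v
    rw [pd_mul ((diffAt_dot3 v).const_mul (1 / 2 * m)) (((hg_cd i).differentiable one_ne_zero) v) i,
      pd_halfmsq]
  have hsum0 : ∀ i : Fin 3, (∫ v : R3, 1 / 2 * m * dot3 v v
      * pd i (fun w => e / m * (E t x i + cross3 w (B t x) i) * F t x w) v)
      = -(∫ v : R3, m * v i * (e / m * (E t x i + cross3 v (B t x) i) * F t x v)) := by
    intro i
    have h0 := hψ i
    simp only [hpdψ i] at h0
    rw [integral_add (hInt_a i) (hInt_b i)] at h0
    linarith
  
  have hptw : ∀ v : R3, (∑ i, m * v i * (e / m * (E t x i + cross3 v (B t x) i) * F t x v))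
      = ∑ i, E t x i * (e * (v i * F t x v)) := by
    intro v
    rw [Fin.sum_univ_three, Fin.sum_univ_three]
    simp only [cross3, Matrix.cons_val_zero, Matrix.cons_val_one, Matrix.head_cons,
      Matrix.cons_val_two, Matrix.tail_cons]
    field_simp
    ring
  have hbp : (∫ v : R3, 1 / 2 * m * dot3 v v
      * (∑ i, pd i (fun w => e / m * (E t x i + cross3 w (B t x) i) * F t x w) v))
      = -∑ i, E t x i * (e * ∫ v : R3, v i * F t x v) := by
    calc (∫ v : R3, 1 / 2 * m * dot3 v v
        * (∑ i, pd i (fun w => e / m * (E t x i + cross3 w (B t x) i) * F t x w) v))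
        = ∫ v : R3, ∑ i, 1 / 2 * m * dot3 v v
            * pd i (fun w => e / m * (E t x i + cross3 w (B t x) i) * F t x w) v := by
          congr 1
          funext v
          rw [Finset.mul_sum]
      _ = ∑ i, ∫ v : R3, 1 / 2 * m * dot3 v v
            * pd i (fun w => e / m * (E t x i + cross3 w (B t x) i) * F t x w) v :=
          integral_finset_sum _ (fun i _ => hInt_b i)
      _ = ∑ i, -(∫ v : R3, m * v i * (e / m * (E t x i + cross3 v (B t x) i) * F t x v)) :=
          Finset.sum_congr rfl fun i _ => hsum0 i
      _ = -(∫ v : R3, ∑ i, m * v i * (e / m * (E t x i + cross3 v (B t x) i) * F t x v)) := by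
          rw [integral_finset_sum _ (fun i _ => hInt_a i)]
          simp
      _ = -(∫ v : R3, ∑ i, E t x i * (e * (v i * F t x v))) := by
          rw [show (fun v : R3 => ∑ i, m * v i * (e / m * (E t x i + cross3 v (B t x) i) * F t x v))
            = fun v : R3 => ∑ i, E t x i * (e * (v i * F t x v)) from funext hptw]
      _ = -∑ i, ∫ v : R3, E t x i * (e * (v i * F t x v)) := by
          rw [integral_finset_sum _ (fun i _ => hInt_c i)]
      _ = -∑ i, E t x i * (e * ∫ v : R3, v i * F t x v) := by
          congr 1
          refine Finset.sum_congr rfl fun i _ => ?_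
          rw [integral_const_mul, integral_const_mul]
  have hptw2 : ∀ v : R3, 1 / 2 * m * dot3 v v * deriv (fun τ => F τ x v) t
      + ∑ i, 1 / 2 * m * dot3 v v * v i * pd i (fun y => F t y v) x
      = -(1 / 2 * m * dot3 v v
          * (∑ i, pd i (fun w => e / m * (E t x i + cross3 w (B t x) i) * F t x w) v)) := by
    intro v
    have h0 := hVl v
    have e1 : (∑ i, 1 / 2 * m * dot3 v v * v i * pd i (fun y => F t y v) x)
        = 1 / 2 * m * dot3 v v * ∑ i, v i * pd i (fun y => F t y v) x := by
      rw [Finset.mul_sum]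
      exact Finset.sum_congr rfl fun i _ => by ring
    rw [e1, ← mul_add, show deriv (fun τ => F τ x v) t
      + ∑ i, v i * pd i (fun y => F t y v) x
      = -(∑ i, pd i (fun w => e / m * (E t x i + cross3 w (B t x) i) * F t x w) v) from by
        linarith, mul_neg]
  have hkin : (∫ v : R3, 1 / 2 * m * dot3 v v * deriv (fun τ => F τ x v) t)
      + (∑ i, ∫ v : R3, 1 / 2 * m * dot3 v v * v i * pd i (fun y => F t y v) x)
      = ∑ i, E t x i * (e * ∫ v : R3, v i * F t x v) := by
    rw [← integral_finset_sum _ (fun i _ => hInt_x i),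
      ← integral_add hInt_t (integrable_finset_sum _ (fun i _ => hInt_x i)),
      show (fun v : R3 => 1 / 2 * m * dot3 v v * deriv (fun τ => F τ x v) t
        + ∑ i, 1 / 2 * m * dot3 v v * v i * pd i (fun y => F t y v) x)
        = fun v : R3 => -(1 / 2 * m * dot3 v v
          * (∑ i, pd i (fun w => e / m * (E t x i + cross3 w (B t x) i) * F t x w) v))
        from funext hptw2,
      integral_neg, hbp, neg_neg]
  -- final assembly
  rw [((hK'.fun_add hEE).fun_add hBB).deriv]
  have hpdsum : (∑ i, pd i (fun y =>
      (∫ v : R3, 1 / 2 * m * dot3 v v * v i * F t y v)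
        + μ₀⁻¹ * cross3 (E t y) (B t y) i) x)
      = (∑ i, pd i (fun y => ∫ v : R3, 1 / 2 * m * dot3 v v * v i * F t y v) x)
        + (∑ i, pd i (fun y => μ₀⁻¹ * cross3 (E t y) (B t y) i) x) := by
    rw [← Finset.sum_add_distrib]
    exact Finset.sum_congr rfl fun i _ => pd_add (hSdiff i) (hQdiff i) i
  rw [hpdsum, Finset.sum_congr rfl (fun i (_ : i ∈ Finset.univ) => hSpd i), hPoynt]
  simp only [dot3, Fin.sum_univ_three] at hkin ⊢
  linear_combination hkin + E t x 0 * hAmpere t x 0 + E t x 1 * hAmpere t x 1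
    + E t x 2 * hAmpere t x 2 + μ₀⁻¹ * B t x 0 * hFaraday t x 0
    + μ₀⁻¹ * B t x 1 * hFaraday t x 1 + μ₀⁻¹ * B t x 2 * hFaraday t x 2
end
end

section
/- (Inversion of the Euler–Lagrange condition for the drift-kinetic Vlasov–Maxwell velocity field.) Let m > 0 and e ≠ 0 be reals, let G, Eᶠ, B⋆, b ∈ ℝ³ with b · B⋆ ≠ 0, and let κ, λ ∈ ℝ. Then a quadruple (u, w, ν, ϑ̇) ∈ ℝ³ × ℝ × ℝ × ℝ satisfies the system (i) G − e Eᶠ − e (u × B⋆) + m w b = 0, (ii) κ − m (b · u) = 0, (iii) λ − (m/e) ϑ̇ = 0, (iv) (m/e) ν = 0, if and only if u = (κ/m) · B⋆/(b·B⋆) + ((e Eᶠ − G) × b)/(e (b·B⋆)), w = B⋆ · (e Eᶠ − G)/(m (b·B⋆)), ν = 0, and ϑ̇ = (e/m) λ. In particular the solution is unique. -/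
noncomputable section

/-- The third standard basis vector `ẑ = (0,0,1)`. -/
def zhat : R3 := ![0, 0, 1]

set_option maxHeartbeats 1000000 in
/-- Inversion of the Euler–Lagrange condition for the drift-kinetic
Vlasov–Maxwell velocity field. -/
theorem drift_kinetic_euler_lagrange_inversion
    (m e : ℝ) (hm : 0 < m) (he : e ≠ 0)
    (G Ef Bst b : R3) (hbB : dot3 b Bst ≠ 0)
    (κ lam : ℝ) (u : R3) (w ν th : ℝ) :
    (G - e • Ef - e • cross3 u Bst + (m * w) • b = 0
        ∧ κ - m * dot3 b u = 0
        ∧ lam - m / e * th = 0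
        ∧ m / e * ν = 0)
      ↔ (u = (κ / m) • ((dot3 b Bst)⁻¹ • Bst)
            + (e * dot3 b Bst)⁻¹ • cross3 (e • Ef - G) b
          ∧ w = dot3 Bst (e • Ef - G) / (m * dot3 b Bst)
          ∧ ν = 0 ∧ th = e / m * lam) := by
  have hm' : m ≠ 0 := ne_of_gt hm
  simp only [dot3, Fin.sum_univ_three] at hbB ⊢
  constructor
  · rintro ⟨h1, h2, h3, h4⟩
    have c0 := congrFun h1 0
    have c1 := congrFun h1 1
    have c2 := congrFun h1 2
    simp only [cross3, Pi.add_apply, Pi.sub_apply, Pi.smul_apply, smul_eq_mul,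
      Matrix.cons_val_zero, Matrix.cons_val_one, Matrix.head_cons,
      Matrix.cons_val_two, Matrix.tail_cons, Pi.zero_apply] at c0 c1 c2
    have hmed : m * e * (b 0 * Bst 0 + b 1 * Bst 1 + b 2 * Bst 2) ≠ 0 :=
      mul_ne_zero (mul_ne_zero hm' he) hbB
    have key : ∀ x B C : ℝ,
        m * e * (b 0 * Bst 0 + b 1 * Bst 1 + b 2 * Bst 2) * x = e * κ * B + m * C →
        x = κ / m * ((b 0 * Bst 0 + b 1 * Bst 1 + b 2 * Bst 2)⁻¹ * B)
          + (e * (b 0 * Bst 0 + b 1 * Bst 1 + b 2 * Bst 2))⁻¹ * C := by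
      intro x B C h
      rw [eq_comm]
      rw [show x = (e * κ * B + m * C) / (m * e * (b 0 * Bst 0 + b 1 * Bst 1 + b 2 * Bst 2)) from
        (eq_div_iff hmed).mpr (by linarith [h])]
      field_simp
    refine ⟨?_, ?_, ?_, ?_⟩
    · funext i
      fin_cases i
      · show u 0 = _
        simp only [cross3, Pi.add_apply, Pi.smul_apply, Pi.sub_apply, smul_eq_mul,
          Matrix.cons_val_zero, Matrix.cons_val_one, Matrix.head_cons,
          Matrix.cons_val_two, Matrix.tail_cons]
        exact key (u 0) (Bst 0) ((e * Ef 1 - G 1) * b 2 - (e * Ef 2 - G 2) * b 1)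
          (by linear_combination (-(m * b 1)) * c2 + (m * b 2) * c1 - (e * Bst 0) * h2)
      · show u 1 = _
        simp only [cross3, Pi.add_apply, Pi.smul_apply, Pi.sub_apply, smul_eq_mul,
          Matrix.cons_val_zero, Matrix.cons_val_one, Matrix.head_cons,
          Matrix.cons_val_two, Matrix.tail_cons]
        exact key (u 1) (Bst 1) ((e * Ef 2 - G 2) * b 0 - (e * Ef 0 - G 0) * b 2)
          (by linear_combination (-(m * b 2)) * c0 + (m * b 0) * c2 - (e * Bst 1) * h2)
      · show u 2 = _
        simp only [cross3, Pi.add_apply, Pi.smul_apply, Pi.sub_apply, smul_eq_mul,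
          Matrix.cons_val_zero, Matrix.cons_val_one, Matrix.head_cons,
          Matrix.cons_val_two, Matrix.tail_cons]
        exact key (u 2) (Bst 2) ((e * Ef 0 - G 0) * b 1 - (e * Ef 1 - G 1) * b 0)
          (by linear_combination (-(m * b 0)) * c1 + (m * b 1) * c0 - (e * Bst 2) * h2)
    · rw [eq_div_iff (mul_ne_zero hm' hbB)]
      simp only [Pi.sub_apply, Pi.smul_apply, smul_eq_mul]
      linear_combination Bst 0 * c0 + Bst 1 * c1 + Bst 2 * c2
    · have h4' : m * ν = 0 := by
        field_simp at h4; rw [mul_zero] at h4; exact h4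
      exact (mul_eq_zero.mp h4').resolve_left hm'
    · field_simp at h3 ⊢
      linarith [h3]
  · rintro ⟨hu, hw, hν, hth⟩
    have c0 := congrFun hu 0
    have c1 := congrFun hu 1
    have c2 := congrFun hu 2
    simp only [cross3, Pi.add_apply, Pi.smul_apply, smul_eq_mul, Pi.sub_apply,
      Matrix.cons_val_zero, Matrix.cons_val_one, Matrix.head_cons,
      Matrix.cons_val_two, Matrix.tail_cons] at c0 c1 c2
    refine ⟨?_, ?_, ?_, ?_⟩
    · funext i
      fin_cases i
      · show G 0 - e * Ef 0 - e * cross3 u Bst 0 + m * w * b 0 = (0 : R3) 0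
        simp only [cross3, Matrix.cons_val_zero, Matrix.cons_val_one, Matrix.head_cons,
          Matrix.cons_val_two, Matrix.tail_cons, Pi.zero_apply]
        rw [c1, c2, hw]
        field_simp
        simp only [Pi.sub_apply, Pi.smul_apply, smul_eq_mul]
        ring
      · show G 1 - e * Ef 1 - e * cross3 u Bst 1 + m * w * b 1 = (0 : R3) 1
        simp only [cross3, Matrix.cons_val_zero, Matrix.cons_val_one, Matrix.head_cons,
          Matrix.cons_val_two, Matrix.tail_cons, Pi.zero_apply]
        rw [c0, c2, hw]
        field_simp
        simp only [Pi.sub_apply, Pi.smul_apply, smul_eq_mul]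
        ring
      · show G 2 - e * Ef 2 - e * cross3 u Bst 2 + m * w * b 2 = (0 : R3) 2
        simp only [cross3, Matrix.cons_val_zero, Matrix.cons_val_one, Matrix.head_cons,
          Matrix.cons_val_two, Matrix.tail_cons, Pi.zero_apply]
        rw [c0, c1, hw]
        field_simp
        simp only [Pi.sub_apply, Pi.smul_apply, smul_eq_mul]
        ring
    · rw [c0, c1, c2]
      field_simp
      ring
    · rw [hth]; field_simp; ring
    · rw [hν]; ring
end
end
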